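/- The map Φ̂ induced by Φ(w₁ + ℓ w₂) = w₁⁻¹ i w₁ + ℓ (w₁⁻¹ w₂) maps onto the spherized null cone K: (i) for all unit quaternions w₁, w₂, the pair x = (conj(w₁) * i * w₁, conj(w₁) * w₂) satisfies Re (x.1) = 0, normSq (x.1) = 1, normSq (x.2) = 1 (hence x ⊛ x = 0); and (ii) for every pair (v₁, v₂) of quaternions with Re v₁ = 0, normSq v₁ = 1, and normSq v₂ = 1, there exist unit quaternions w₁, w₂ such that conj(w₁) * i * w₁ = v₁ and conj(w₁) * w₂ = v₂ (one may take w₂ = w₁ * v₂). -/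

import Mathlib

open Quaternion

noncomputable section

/-- The quaternion imaginary unit `i`. -/
def qi : ℍ[ℝ] := ⟨0, 1, 0, 0⟩

/-- The split-octonion product on `ℍ × ℍ`: `(a,b) ⊛ (c,d) = (a*c + d*conj b, conj a * d + c*b)`. -/
def omul (x y : ℍ[ℝ] × ℍ[ℝ]) : ℍ[ℝ] × ℍ[ℝ] :=
  (x.1 * y.1 + y.2 * star x.2, star x.1 * y.2 + y.1 * x.2)

lemma qi_re : qi.re = 0 := rfl
lemma qi_imI : qi.imI = 1 := rfl
lemma qi_imJ : qi.imJ = 0 := rfl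
lemma qi_imK : qi.imK = 0 := rfl

def qj : ℍ[ℝ] := ⟨0, 0, 1, 0⟩
lemma qj_re : qj.re = 0 := rfl
lemma qj_imI : qj.imI = 0 := rfl
lemma qj_imJ : qj.imJ = 1 := rfl
lemma qj_imK : qj.imK = 0 := rfl

lemma star_qi : star qi = -qi := by ext <;> simp [qi_re, qi_imI, qi_imJ, qi_imK]

lemma qi_sq : qi * qi = -1 := by ext <;> simp [qi_re, qi_imI, qi_imJ, qi_imK]

lemma normSq_qi : normSq qi = 1 := by simp [normSq_def', qi_re, qi_imI, qi_imJ, qi_imK]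

lemma aux_conj (v₁ : ℍ[ℝ]) (w : ℍ[ℝ]) (hw : w ≠ 0) (hcomm : qi * w = w * v₁) :
    ∃ w₁ : ℍ[ℝ], normSq w₁ = 1 ∧ star w₁ * qi * w₁ = v₁ := by
  have hn : (0:ℝ) < normSq w := lt_of_le_of_ne (normSq_nonneg) (Ne.symm (normSq_ne_zero.mpr hw))
  set r := Real.sqrt (normSq w) with hr
  have hr0 : 0 < r := Real.sqrt_pos.mpr hn
  have hr2 : r ^ 2 = normSq w := Real.sq_sqrt hn.le
  refine ⟨r⁻¹ • w, ?_, ?_⟩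
  · rw [normSq_smul, inv_pow, hr2, inv_mul_cancel₀ hn.ne']
  · have h2 : star w * qi * w = normSq w • v₁ := by
      rw [mul_assoc, hcomm, ← mul_assoc, star_mul_self, coe_mul_eq_smul]
    rw [Quaternion.star_smul, smul_mul_assoc, smul_mul_assoc, mul_smul_comm, smul_smul,
      h2, smul_smul, ← mul_inv, ← sq, hr2, inv_mul_cancel₀ hn.ne', one_smul]

/-- The induced map `Φ̂` lands in, and maps onto, the spherized null cone `K`. -/
theorem phi_onto_spherized_cone :
    (∀ w₁ w₂ : ℍ[ℝ], normSq w₁ = 1 → normSq w₂ = 1 →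
      (star w₁ * qi * w₁).re = 0 ∧ normSq (star w₁ * qi * w₁) = 1 ∧
      normSq (star w₁ * w₂) = 1 ∧
      omul (star w₁ * qi * w₁, star w₁ * w₂) (star w₁ * qi * w₁, star w₁ * w₂) = 0) ∧
    (∀ v₁ v₂ : ℍ[ℝ], v₁.re = 0 → normSq v₁ = 1 → normSq v₂ = 1 →
      ∃ w₁ w₂ : ℍ[ℝ], normSq w₁ = 1 ∧ normSq w₂ = 1 ∧
        star w₁ * qi * w₁ = v₁ ∧ star w₁ * w₂ = v₂) := by
  constructor
  · intro w₁ w₂ h1 h2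
    set a := star w₁ * qi * w₁ with ha
    set b := star w₁ * w₂ with hb
    have hsa : star a = -a := by
      simp [ha, star_qi, mul_assoc]
    have hre : a.re = 0 := by
      have := congrArg (fun q : ℍ[ℝ] => q.re) hsa
      simp only [re_star, re_neg] at this
      linarith
    have hna : normSq a = 1 := by
      simp [ha, map_mul, normSq_star, h1, normSq_qi]
    have hnb : normSq b = 1 := by
      simp [hb, map_mul, normSq_star, h1, h2]
    refine ⟨hre, hna, hnb, ?_⟩
    have haa : a * a = -1 := by
      have : a * a = -(star a * a) := by rw [hsa, neg_mul, neg_neg]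
      rw [this, star_mul_self, hna]; norm_num
    have hbb : b * star b = 1 := by
      rw [self_mul_star, hnb]; norm_num
    simp only [omul, Prod.mk_eq_zero]
    constructor
    · rw [haa, hbb, neg_add_cancel]
    · rw [hsa, neg_mul, neg_add_cancel]
  · intro v₁ v₂ hre hn1 hn2
    -- find w with qi * w = w * v₁, w ≠ 0
    have hstar : star v₁ = -v₁ := by ext <;> simp [hre]
    have hvv : v₁ * v₁ = -1 := by
      have : v₁ * v₁ = -(star v₁ * v₁) := by rw [hstar, neg_mul, neg_neg]
      rw [this, star_mul_self, hn1]; norm_num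
    obtain ⟨w, hw0, hwc⟩ : ∃ w : ℍ[ℝ], w ≠ 0 ∧ qi * w = w * v₁ := by
      by_cases hI : v₁.imI = -1
      · have hv : v₁ = -qi := by
          have h' : v₁.imJ ^ 2 + v₁.imK ^ 2 = 0 := by
            rw [normSq_def'] at hn1
            rw [hre, hI] at hn1
            nlinarith
          have hJ : v₁.imJ = 0 := by nlinarith [sq_nonneg v₁.imJ, sq_nonneg v₁.imK]
          have hK : v₁.imK = 0 := by nlinarith [sq_nonneg v₁.imJ, sq_nonneg v₁.imK]
          ext <;> simp [qi_re, qi_imI, qi_imJ, qi_imK, hre, hI, hJ, hK]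
        refine ⟨qj, ?_, ?_⟩
        · intro h
          have := congrArg (fun q : ℍ[ℝ] => q.imJ) h
          simp [qj_imJ] at this
        · rw [hv]; ext <;> simp [qi_re, qi_imI, qi_imJ, qi_imK, qj_re, qj_imI, qj_imJ, qj_imK]
      · refine ⟨1 - qi * v₁, ?_, ?_⟩
        · intro h
          have := congrArg (fun q : ℍ[ℝ] => q.re) h
          simp [qi_re, qi_imI, qi_imJ, qi_imK, re_mul] at this
          apply hI
          linarith
        · rw [mul_sub, sub_mul, ← mul_assoc, qi_sq, mul_assoc, hvv]
          simp only [mul_one, one_mul, neg_one_mul, mul_neg_one, sub_neg_eq_add]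
          exact add_comm _ _
    obtain ⟨w₁, hw₁n, hw₁⟩ := aux_conj v₁ w hw0 hwc
    refine ⟨w₁, w₁ * v₂, hw₁n, ?_, hw₁, ?_⟩
    · rw [map_mul, hw₁n, hn2, one_mul]
    · rw [← mul_assoc, star_mul_self, hw₁n]
      norm_num
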